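/- Let E be a directed graph and let λ = e₁⋯eₙ be the unique closed simple path based at a vertex v (i.e., s(e₁) = v = r(eₙ) and s(e_i) ≠ v for i = 2,…,n, and no other closed simple path is based at v). Then λ is a cycle: the vertices s(e₁), …, s(eₙ) are pairwise distinct. -/

import Mathlib

/-- A path in a directed graph with edge set `E`, vertex set `V` and
source/range maps `s r : E → V` is a list of edges in which consecutive edges
are composable. -/
def IsGraphPath {V E : Type*} (s r : E → V) (es : List E) : Prop :=
  es.Chain' fun e f => r e = s f

/-- A closed path based at `v`: a nonempty path starting and ending at `v`. -/
structure IsClosedPath {V E : Type*} (s r : E → V) (v : V) (es : List E) : Prop where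
  ne : es ≠ []
  path : IsGraphPath s r es
  src : ∀ h : es ≠ [], s (es.head h) = v
  rng : ∀ h : es ≠ [], r (es.getLast h) = v

/-- A closed simple path based at `v`: a closed path `e₁⋯eₙ` based at `v` such
that `s eᵢ ≠ v` for `i = 2, …, n`. -/
def IsClosedSimplePath {V E : Type*} (s r : E → V) (v : V) (es : List E) : Prop :=
  IsClosedPath s r v es ∧ ∀ i (h : i < es.length), 0 < i → s es[i] ≠ v

private lemma key_aux {V E : Type*} (s r : E → V) (v : V) (l : List E)
    (hl : IsClosedSimplePath s r v l)
    (huniq : ∀ m : List E, IsClosedSimplePath s r v m → m = l) :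
    ∀ i j (hi : i < l.length) (hj : j < l.length), i < j → s l[i] ≠ s l[j] := by
  intro i j hi hj hij heq
  rcases Nat.eq_zero_or_pos i with rfl | hipos
  · have hne := hl.1.ne
    have hv : s (l[0]'(by omega)) = v := by
      rw [List.getElem_zero]; exact hl.1.src hne
    exact hl.2 j hj hij (heq ▸ hv)
  · set m := l.take i ++ l.drop j with hm
    have hlenm : m.length = i + (l.length - j) := by
      simp [hm, Nat.min_eq_left hi.le]
    have hmlt : m.length < l.length := by omega
    -- getElem characterization of m
    have hget1 : ∀ k (hk : k < i), m[k]'(by omega) = l[k]'(by omega) := by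
      intro k hk
      simp only [hm]
      rw [List.getElem_append_left (by simpa [Nat.min_eq_left hi.le] using hk)]
      simp
    have hget2 : ∀ k (hk : i ≤ k) (hk2 : k < m.length),
        m[k]'hk2 = l[j + (k - i)]'(by omega) := by
      intro k hk hk2
      simp only [hm]
      rw [List.getElem_append_right (by simpa [Nat.min_eq_left hi.le] using hk)]
      simp [Nat.min_eq_left hi.le]
    have hmne : m ≠ [] := by
      intro h; rw [h] at hlenm; simp at hlenm; omega
    have hchain : ∀ k (hk : k < l.length - 1),
        r (l[k]'(by omega)) = s (l[k+1]'(by omega)) := by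
      intro k hk
      exact List.isChain_iff_getElem.mp hl.1.path k (by omega)
    have hmcsp : IsClosedSimplePath s r v m := by
      refine ⟨⟨hmne, ?_, ?_, ?_⟩, ?_⟩
      · rw [IsGraphPath]; apply List.isChain_iff_getElem.mpr
        intro k hk
        rcases lt_trichotomy (k+1) i with h1 | h1 | h1
        · rw [hget1 k (by omega), hget1 (k+1) h1]
          exact hchain k (by omega)
        · rw [hget1 k (by omega), hget2 (k+1) (by omega) (by omega)]
          have h2 : j + (k + 1 - i) = j := by omega
          simp only [h2]
          rw [← heq]
          subst h1
          exact hchain k (by omega)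
        · rw [hget2 k (by omega) (by omega), hget2 (k+1) (by omega) (by omega)]
          have h2 : j + (k + 1 - i) = (j + (k - i)) + 1 := by omega
          simp only [h2]
          exact hchain _ (by omega)
      · intro h
        have h0 : (0:ℕ) < m.length := List.length_pos_iff.mpr h
        rw [← List.getElem_zero h0, hget1 0 hipos, List.getElem_zero (by omega)]
        exact hl.1.src hl.1.ne
      · intro h
        rw [List.getLast_eq_getElem,
          hget2 (m.length - 1) (by omega) (by omega)]
        have he : j + (m.length - 1 - i) = l.length - 1 := by omega
        simp only [he]
        rw [← List.getLast_eq_getElem hl.1.ne]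
        exact hl.1.rng hl.1.ne
      · intro k hk hk0
        rcases lt_or_ge k i with h1 | h1
        · rw [hget1 k h1]; exact hl.2 k (by omega) hk0
        · rw [hget2 k h1 hk]; exact hl.2 _ (by omega) (by omega)
    have := huniq m hmcsp
    rw [this] at hmlt
    omega

/-- If `l` is the unique closed simple path based at `v`, then `l`
is a cycle: its source vertices are pairwise distinct. -/
theorem unique_closed_simple_path_is_cycle
    {V E : Type*} (s r : E → V) (v : V) (l : List E)
    (hl : IsClosedSimplePath s r v l)
    (huniq : ∀ m : List E, IsClosedSimplePath s r v m → m = l) :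
    ∀ i j (hi : i < l.length) (hj : j < l.length), s l[i] = s l[j] → i = j := by
  intro i j hi hj heq
  rcases lt_trichotomy i j with h | h | h
  · exact absurd heq (key_aux s r v l hl huniq i j hi hj h)
  · exact h
  · exact absurd heq.symm (key_aux s r v l hl huniq j i hj hi h)
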